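/- The Jacobi identity for theta functions holds: θ'(0, τ) = π θ₁(0, τ) θ₂(0, τ) θ₃(0, τ), where θ'(0,τ) denotes the derivative of θ(v,τ) in v at v = 0. -/

import Mathlib

open Complex

/-- `q = e^{2πiτ}`. -/
noncomputable def qnome (τ : ℂ) : ℂ := Complex.exp (2 * (Real.pi : ℂ) * Complex.I * τ)

/-- `q^{1/2} = e^{πiτ}`. -/
noncomputable def qhalf (τ : ℂ) : ℂ := Complex.exp ((Real.pi : ℂ) * Complex.I * τ)

/-- `θ(v,τ) = 2 q^{1/8} sin(πv) ∏_{j≥1} (1-q^j)(1-e^{2πiv}q^j)(1-e^{-2πiv}q^j)`. -/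
noncomputable def jacobiTheta0 (v τ : ℂ) : ℂ :=
  2 * Complex.exp ((Real.pi : ℂ) * Complex.I * τ / 4) * Complex.sin ((Real.pi : ℂ) * v) *
    ∏' j : ℕ, ((1 - qnome τ ^ (j + 1)) *
      (1 - Complex.exp (2 * (Real.pi : ℂ) * Complex.I * v) * qnome τ ^ (j + 1)) *
      (1 - Complex.exp (-(2 * (Real.pi : ℂ) * Complex.I * v)) * qnome τ ^ (j + 1)))

/-- `θ₁(v,τ) = 2 q^{1/8} cos(πv) ∏_{j≥1} (1-q^j)(1+e^{2πiv}q^j)(1+e^{-2πiv}q^j)`. -/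
noncomputable def jacobiTheta1 (v τ : ℂ) : ℂ :=
  2 * Complex.exp ((Real.pi : ℂ) * Complex.I * τ / 4) * Complex.cos ((Real.pi : ℂ) * v) *
    ∏' j : ℕ, ((1 - qnome τ ^ (j + 1)) *
      (1 + Complex.exp (2 * (Real.pi : ℂ) * Complex.I * v) * qnome τ ^ (j + 1)) *
      (1 + Complex.exp (-(2 * (Real.pi : ℂ) * Complex.I * v)) * qnome τ ^ (j + 1)))

/-- `θ₂(v,τ) = ∏_{j≥1} (1-q^j)(1-e^{2πiv}q^{j-1/2})(1-e^{-2πiv}q^{j-1/2})`. -/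
noncomputable def jacobiTheta2 (v τ : ℂ) : ℂ :=
  ∏' j : ℕ, ((1 - qnome τ ^ (j + 1)) *
    (1 - Complex.exp (2 * (Real.pi : ℂ) * Complex.I * v) * qhalf τ ^ (2 * j + 1)) *
    (1 - Complex.exp (-(2 * (Real.pi : ℂ) * Complex.I * v)) * qhalf τ ^ (2 * j + 1)))

/-- `θ₃(v,τ) = ∏_{j≥1} (1-q^j)(1+e^{2πiv}q^{j-1/2})(1+e^{-2πiv}q^{j-1/2})`. -/
noncomputable def jacobiTheta3 (v τ : ℂ) : ℂ :=
  ∏' j : ℕ, ((1 - qnome τ ^ (j + 1)) *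
    (1 + Complex.exp (2 * (Real.pi : ℂ) * Complex.I * v) * qhalf τ ^ (2 * j + 1)) *
    (1 + Complex.exp (-(2 * (Real.pi : ℂ) * Complex.I * v)) * qhalf τ ^ (2 * j + 1)))

section JacAux
open Complex Filter Topology

lemma jac_one_sub_ne_zero {z : ℂ} (h : ‖z‖ < 1) : 1 - z ≠ 0 := by
  intro h0
  have : z = 1 := by linear_combination -h0
  simp [this] at h

lemma jac_one_add_ne_zero {z : ℂ} (h : ‖z‖ < 1) : 1 + z ≠ 0 := by
  intro h0
  have : z = -1 := by linear_combination h0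
  simp [this] at h

lemma jac_summable_log {f : ℕ → ℂ} (hs : Summable fun n => ‖f n - 1‖) :
    Summable fun n => Complex.log (f n) := by
  have htend : Tendsto (fun n => ‖f n - 1‖) atTop (𝓝 0) := hs.tendsto_atTop_zero
  have hev : ∀ᶠ n in atTop, ‖f n - 1‖ ≤ 1 / 2 :=
    htend.eventually (eventually_le_nhds (by norm_num))
  apply Summable.of_norm_bounded_eventually (g := fun n => (3/2) * ‖f n - 1‖) (hs.mul_left _)
  rw [Nat.cofinite_eq_atTop]
  filter_upwards [hev] with n hn
  have := Complex.norm_log_one_add_half_le_self (z := f n - 1) hn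
  simpa using this

lemma jac_hasProd {f : ℕ → ℂ} (h0 : ∀ n, f n ≠ 0) (hs : Summable fun n => ‖f n - 1‖) :
    HasProd f (Complex.exp (∑' n, Complex.log (f n))) := by
  have h1 := (jac_summable_log hs).hasSum.cexp
  have h2 : cexp ∘ (fun n => Complex.log (f n)) = f :=
    funext fun n => Complex.exp_log (h0 n)
  rwa [h2] at h1

lemma jac_multipliable {f : ℕ → ℂ} (h0 : ∀ n, f n ≠ 0) (hs : Summable fun n => ‖f n - 1‖) :
    Multipliable f := (jac_hasProd h0 hs).multipliable

lemma jac_tprod_ne_zero {f : ℕ → ℂ} (h0 : ∀ n, f n ≠ 0) (hs : Summable fun n => ‖f n - 1‖) :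
    (∏' n, f n) ≠ 0 := by
  rw [(jac_hasProd h0 hs).tprod_eq]
  exact Complex.exp_ne_zero _

lemma jac_norm_pow_lt_one {x : ℂ} (hx : ‖x‖ < 1) {k : ℕ} (hk : 1 ≤ k) : ‖x ^ k‖ < 1 := by
  rw [norm_pow]
  calc ‖x‖ ^ k ≤ ‖x‖ ^ 1 := pow_le_pow_of_le_one (norm_nonneg x) hx.le hk
  _ = ‖x‖ := pow_one _
  _ < 1 := hx

lemma jac_summable_norm_pow {x : ℂ} (hx : ‖x‖ < 1) (e : ℕ → ℕ) (he : ∀ n, n ≤ e n) :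
    Summable fun n => ‖x ^ (e n)‖ := by
  apply Summable.of_nonneg_of_le (fun n => norm_nonneg _) (fun n => ?_)
    (summable_geometric_of_lt_one (norm_nonneg x) hx)
  rw [norm_pow]
  calc ‖x‖ ^ (e n) ≤ ‖x‖ ^ n := pow_le_pow_of_le_one (norm_nonneg x) hx.le (he n)
  _ = ‖x‖ ^ n := rfl

lemma jac_multipliable_one_sub {x : ℂ} (hx : ‖x‖ < 1) (e : ℕ → ℕ) (he : ∀ n, n + 1 ≤ e n) :
    Multipliable fun n => 1 - x ^ (e n) := by
  refine jac_multipliable (fun n => jac_one_sub_ne_zero (jac_norm_pow_lt_one hx (by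
    have := he n; omega))) ?_
  simpa using jac_summable_norm_pow hx e fun n => by have := he n; omega

lemma jac_multipliable_one_add {x : ℂ} (hx : ‖x‖ < 1) (e : ℕ → ℕ) (he : ∀ n, n + 1 ≤ e n) :
    Multipliable fun n => 1 + x ^ (e n) := by
  refine jac_multipliable (fun n => jac_one_add_ne_zero (jac_norm_pow_lt_one hx (by
    have := he n; omega))) ?_
  simpa using jac_summable_norm_pow hx e fun n => by have := he n; omega

lemma jac_tprod_one_sub_ne_zero {x : ℂ} (hx : ‖x‖ < 1) (e : ℕ → ℕ) (he : ∀ n, n + 1 ≤ e n) :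
    (∏' n, (1 - x ^ (e n))) ≠ 0 := by
  refine jac_tprod_ne_zero (fun n => jac_one_sub_ne_zero (jac_norm_pow_lt_one hx (by
    have := he n; omega))) ?_
  simpa using jac_summable_norm_pow hx e fun n => by have := he n; omega

lemma jac_triple_bound {x y z : ℂ} {e : ℝ} (he : e ≤ 1)
    (hx : ‖x‖ ≤ e) (hy : ‖y‖ ≤ e) (hz : ‖z‖ ≤ e) :
    ‖(1 - x) * (1 - y) * (1 - z) - 1‖ ≤ 7 * e := by
  have h0 : 0 ≤ e := le_trans (norm_nonneg x) hx
  have key : (1 - x) * (1 - y) * (1 - z) - 1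
      = -(x + y + z) + (x * y + x * z + y * z) - x * y * z := by ring
  rw [key]
  have h1 : ‖-(x + y + z) + (x * y + x * z + y * z) - x * y * z‖
      ≤ ‖x + y + z‖ + (‖x * y‖ + ‖x * z‖ + ‖y * z‖) + ‖x * y * z‖ := by
    calc ‖-(x + y + z) + (x * y + x * z + y * z) - x * y * z‖
        ≤ ‖-(x + y + z) + (x * y + x * z + y * z)‖ + ‖x * y * z‖ := norm_sub_le _ _
      _ ≤ ‖-(x + y + z)‖ + ‖x * y + x * z + y * z‖ + ‖x * y * z‖ := by
          gcongr; exact norm_add_le _ _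
      _ ≤ ‖x + y + z‖ + (‖x * y‖ + ‖x * z‖ + ‖y * z‖) + ‖x * y * z‖ := by
          rw [norm_neg]; gcongr
          calc ‖x * y + x * z + y * z‖ ≤ ‖x * y + x * z‖ + ‖y * z‖ := norm_add_le _ _
            _ ≤ ‖x * y‖ + ‖x * z‖ + ‖y * z‖ := by gcongr; exact norm_add_le _ _
  have hxyz : ‖x + y + z‖ ≤ 3 * e := by
    calc ‖x + y + z‖ ≤ ‖x + y‖ + ‖z‖ := norm_add_le _ _
      _ ≤ ‖x‖ + ‖y‖ + ‖z‖ := by gcongr; exact norm_add_le _ _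
      _ ≤ 3 * e := by linarith
  have hee : e * e ≤ e := by nlinarith
  have hmul : ∀ a b : ℂ, ‖a‖ ≤ e → ‖b‖ ≤ e → ‖a * b‖ ≤ e := by
    intro a b ha hb
    rw [norm_mul]
    calc ‖a‖ * ‖b‖ ≤ e * e := mul_le_mul ha hb (norm_nonneg _) h0
      _ ≤ e := hee
  have hxy := hmul x y hx hy
  have hxz := hmul x z hx hz
  have hyz := hmul y z hy hz
  have hxyz3 := hmul (x * y) z hxy hz
  linarith

lemma jac_euler {q : ℂ} (hq : ‖q‖ < 1) :
    (∏' n : ℕ, (1 + q ^ (n + 1))) * (∏' n : ℕ, (1 - q ^ (2 * n + 1))) = 1 := by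
  have MA : Multipliable fun n : ℕ => 1 + q ^ (n + 1) :=
    jac_multipliable_one_add hq _ fun n => le_refl _
  have MD : Multipliable fun n : ℕ => 1 - q ^ (n + 1) :=
    jac_multipliable_one_sub hq _ fun n => le_refl _
  have MO : Multipliable fun n : ℕ => 1 - q ^ (2 * n + 1) :=
    jac_multipliable_one_sub hq _ fun n => by omega
  have ME : Multipliable fun n : ℕ => 1 - q ^ (2 * n + 2) :=
    jac_multipliable_one_sub hq _ fun n => by omega
  have key1 : (∏' n : ℕ, (1 + q ^ (n + 1))) * (∏' n : ℕ, (1 - q ^ (n + 1)))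
      = ∏' n : ℕ, (1 - q ^ (2 * n + 2)) := by
    rw [← Multipliable.tprod_mul MA MD]
    exact tprod_congr fun n => by ring
  have key2 : (∏' n : ℕ, (1 - q ^ (2 * n + 1))) * (∏' n : ℕ, (1 - q ^ (2 * n + 2)))
      = ∏' n : ℕ, (1 - q ^ (n + 1)) := by
    have := tprod_even_mul_odd (f := fun n : ℕ => 1 - q ^ (n + 1)) MO
      (by simpa [Nat.add_assoc] using ME)
    simpa using this
  have hE : (∏' n : ℕ, (1 - q ^ (2 * n + 2))) ≠ 0 :=
    jac_tprod_one_sub_ne_zero hq _ fun n => by omega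
  have h3 : ((∏' n : ℕ, (1 + q ^ (n + 1))) * (∏' n : ℕ, (1 - q ^ (2 * n + 1))))
      * (∏' n : ℕ, (1 - q ^ (2 * n + 2)))
      = 1 * (∏' n : ℕ, (1 - q ^ (2 * n + 2))) := by
    rw [one_mul, mul_assoc, key2, key1]
  exact mul_right_cancel₀ hE h3

lemma jac_norm_qnome_lt_one (τ : ℂ) (hτ : 0 < τ.im) : ‖qnome τ‖ < 1 := by
  rw [qnome, Complex.norm_exp]
  rw [Real.exp_lt_one_iff]
  have : (2 * (Real.pi : ℂ) * Complex.I * τ).re = -(2 * Real.pi * τ.im) := by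
    simp [Complex.mul_re, Complex.mul_im]
  rw [this]
  have := Real.pi_pos
  nlinarith

lemma jac_theta0_hasDerivAt (τ : ℂ) (hτ : 0 < τ.im) :
    HasDerivAt (fun v => jacobiTheta0 v τ)
      (2 * Complex.exp ((Real.pi : ℂ) * Complex.I * τ / 4) * (Real.pi : ℂ) *
        ∏' j : ℕ, ((1 - qnome τ ^ (j + 1)) * (1 - qnome τ ^ (j + 1)) *
          (1 - qnome τ ^ (j + 1)))) 0 := by
  have hq0 : qnome τ ≠ 0 := Complex.exp_ne_zero _
  have ht1 : ‖qnome τ‖ < 1 := jac_norm_qnome_lt_one τ hτ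
  set q : ℂ := qnome τ with hqdef
  set t : ℝ := ‖q‖ with htdef
  have ht0 : 0 < t := norm_pos_iff.2 hq0
  set K : ℝ := (1 + t) / (2 * t) with hKdef
  have hKpos : 0 < K := by positivity
  have hK1 : 1 < K := by
    rw [hKdef, lt_div_iff₀ (by positivity)]
    linarith
  have hKt : K * t < 1 := by
    rw [hKdef]
    rw [div_mul_eq_mul_div, mul_comm (2:ℝ) t, ← div_div, mul_div_assoc]
    rw [div_self (ne_of_gt ht0)]
    linarith
  set r : ℝ := Real.log K / (2 * Real.pi) with hrdef
  have hr : 0 < r := div_pos (Real.log_pos hK1) (by positivity)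
  have hexpK : Real.exp (2 * Real.pi * r) = K := by
    rw [hrdef, show 2 * Real.pi * (Real.log K / (2 * Real.pi)) = Real.log K by
      field_simp]
    exact Real.exp_log hKpos
  set F : ℕ → ℂ → ℂ := fun j v => (1 - q ^ (j + 1)) *
      (1 - Complex.exp (2 * (Real.pi : ℂ) * Complex.I * v) * q ^ (j + 1)) *
      (1 - Complex.exp (-(2 * (Real.pi : ℂ) * Complex.I * v)) * q ^ (j + 1)) with hFdef
  set P : ℂ → ℂ := fun v => ∏' j : ℕ, F j v with hPdef
  -- the exponential bound on the ball
  have hExpBound : ∀ v ∈ Metric.ball (0:ℂ) r,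
      ‖Complex.exp (2 * (Real.pi : ℂ) * Complex.I * v)‖ ≤ K ∧
      ‖Complex.exp (-(2 * (Real.pi : ℂ) * Complex.I * v))‖ ≤ K := by
    intro v hv
    have hv' : ‖v‖ < r := by rwa [Metric.mem_ball, dist_zero_right] at hv
    have him : |v.im| ≤ ‖v‖ := Complex.abs_im_le_norm v
    have hre : (2 * (Real.pi : ℂ) * Complex.I * v).re = -(2 * Real.pi * v.im) := by
      simp [Complex.mul_re, Complex.mul_im]
    have hπ := Real.pi_pos
    constructor
    · rw [Complex.norm_exp, ← hexpK]
      apply Real.exp_le_exp.2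
      rw [hre]
      nlinarith [abs_le.1 him, hv'.le]
    · rw [Complex.norm_exp, ← hexpK]
      apply Real.exp_le_exp.2
      rw [Complex.neg_re, hre]
      nlinarith [abs_le.1 him, hv'.le]
  have hKt' : ∀ j : ℕ, K * t ^ (j + 1) ≤ K * t := by
    intro j
    have : t ^ (j + 1) ≤ t := by
      calc t ^ (j + 1) ≤ t ^ 1 := pow_le_pow_of_le_one ht0.le ht1.le (by omega)
        _ = t := pow_one t
    exact mul_le_mul_of_nonneg_left this hKpos.le
  have hFb : ∀ (j : ℕ), ∀ v ∈ Metric.ball (0:ℂ) r,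
      ‖F j v - 1‖ ≤ 7 * (K * t ^ (j + 1)) := by
    intro j v hv
    obtain ⟨h1, h2⟩ := hExpBound v hv
    apply jac_triple_bound (le_trans (hKt' j) hKt.le)
    · rw [norm_pow]
      calc t ^ (j+1) = 1 * t ^ (j+1) := (one_mul _).symm
        _ ≤ K * t ^ (j + 1) := by
            apply mul_le_mul_of_nonneg_right hK1.le (by positivity)
    · rw [norm_mul, norm_pow]
      exact mul_le_mul_of_nonneg_right h1 (by positivity)
    · rw [norm_mul, norm_pow]
      exact mul_le_mul_of_nonneg_right h2 (by positivity)
  have hF0 : ∀ (j : ℕ), ∀ v ∈ Metric.ball (0:ℂ) r, F j v ≠ 0 := by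
    intro j v hv
    obtain ⟨h1, h2⟩ := hExpBound v hv
    have hb : ∀ w : ℂ, ‖w‖ ≤ K * t ^ (j + 1) → 1 - w ≠ 0 := by
      intro w hw
      exact jac_one_sub_ne_zero (lt_of_le_of_lt (le_trans hw (hKt' j)) hKt)
    apply mul_ne_zero (mul_ne_zero _ _)
    · apply hb
      rw [norm_mul, norm_pow]
      exact mul_le_mul_of_nonneg_right h2 (by positivity)
    · apply hb
      rw [norm_pow]
      calc t ^ (j+1) = 1 * t ^ (j+1) := (one_mul _).symm
        _ ≤ K * t ^ (j + 1) := mul_le_mul_of_nonneg_right hK1.le (by positivity)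
    · apply hb
      rw [norm_mul, norm_pow]
      exact mul_le_mul_of_nonneg_right h1 (by positivity)
  -- choose N
  obtain ⟨N, hN⟩ := exists_pow_lt_of_lt_one (show (0:ℝ) < 1/(14*K) by positivity) ht1
  have hsmall : ∀ j : ℕ, 7 * (K * t ^ (j + N + 1)) ≤ 1/2 := by
    intro j
    have h1 : t ^ (j + N + 1) ≤ t ^ N := pow_le_pow_of_le_one ht0.le ht1.le (by omega)
    have h2 : 7 * (K * t ^ N) < 7 * (K * (1/(14*K))) := by
      have := mul_lt_mul_of_pos_left hN hKpos
      linarith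
    have h3 : 7 * (K * (1/(14*K))) = 1/2 := by field_simp; ring
    nlinarith [mul_le_mul_of_nonneg_left h1 hKpos.le]
  have hgeom : Summable fun j : ℕ => (21/2) * (K * t ^ (N + 1)) * t ^ j :=
    (summable_geometric_of_lt_one ht0.le ht1).mul_left _
  have hlog : ∀ (j : ℕ), ∀ v ∈ Metric.ball (0:ℂ) r,
      ‖Complex.log (F (j + N) v)‖ ≤ (21/2) * (K * t ^ (N + 1)) * t ^ j := by
    intro j v hv
    have hb := hFb (j + N) v hv
    have hb2 : ‖F (j + N) v - 1‖ ≤ 1/2 := le_trans hb (hsmall j)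
    have key : F (j + N) v = 1 + (F (j + N) v - 1) := by ring
    rw [key]
    refine le_trans (Complex.norm_log_one_add_half_le_self (by simpa using hb2)) ?_
    have heq : (21/2) * (K * t ^ (N + 1)) * t ^ j = (3/2) * (7 * (K * t ^ (j + N + 1))) := by
      rw [show j + N + 1 = (N + 1) + j by omega, pow_add]
      ring
    rw [heq]
    linarith
  have hFcont : ∀ j : ℕ, Continuous (F j) := by
    intro j
    apply Continuous.mul
    apply Continuous.mul
    · exact continuous_const
    · exact continuous_const.sub (((continuous_const.mul continuous_id).cexp).mul
        continuous_const)
    · exact continuous_const.sub ((((continuous_const.mul continuous_id).neg).cexp).mul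
        continuous_const)
  set S : ℂ → ℂ := fun v => ∑' j : ℕ, Complex.log (F (j + N) v) with hSdef
  have hScont : ContinuousOn S (Metric.ball (0:ℂ) r) := by
    apply continuousOn_tsum (u := fun j : ℕ => (21/2) * (K * t ^ (N + 1)) * t ^ j)
      _ hgeom (fun j v hv => hlog j v hv)
    intro j
    intro v hv
    apply ContinuousAt.continuousWithinAt
    have hb2 : ‖F (j + N) v - 1‖ ≤ 1/2 := le_trans (hFb (j + N) v hv) (hsmall j)
    have hre : |(F (j + N) v).re - 1| ≤ 1/2 := by
      have := Complex.abs_re_le_norm (F (j + N) v - 1)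
      simpa using le_trans this hb2
    have hmem : F (j + N) v ∈ Complex.slitPlane := by
      rw [Complex.mem_slitPlane_iff]
      left
      have := abs_le.1 hre
      linarith [this.1]
    exact (continuousAt_clog hmem).comp (hFcont (j + N)).continuousAt
  have hsumnorm : ∀ v ∈ Metric.ball (0:ℂ) r,
      Summable fun j : ℕ => ‖F (j + N) v - 1‖ := by
    intro v hv
    apply Summable.of_nonneg_of_le (fun j => norm_nonneg _) (fun j => ?_) hgeom
    apply le_trans (hFb (j + N) v hv)
    rw [show j + N + 1 = (N + 1) + j by omega, pow_add]
    have hx : 0 ≤ K * t ^ (N + 1) * t ^ j := by positivity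
    nlinarith [hx]
  have hHP : ∀ v ∈ Metric.ball (0:ℂ) r,
      HasProd (fun j : ℕ => F (j + N) v) (Complex.exp (S v)) :=
    fun v hv => jac_hasProd (fun j => hF0 (j + N) v hv) (hsumnorm v hv)
  have hPrep : ∀ v ∈ Metric.ball (0:ℂ) r,
      P v = (∏ j ∈ Finset.range N, F j v) * Complex.exp (S v) := by
    intro v hv
    have hm : Multipliable fun j : ℕ => F (j + N) v := (hHP v hv).multipliable
    show (∏' j : ℕ, F j v) = _
    rw [← Multipliable.prod_mul_tprod_nat_mul' (f := fun j : ℕ => F j v) (k := N) hm, (hHP v hv).tprod_eq]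
  have hPcont : ContinuousOn P (Metric.ball (0:ℂ) r) := by
    exact ContinuousOn.congr
      (((continuous_finset_prod _ fun j _ => hFcont j).continuousOn).mul hScont.cexp)
      (fun v hv => hPrep v hv)
  have hPat : ContinuousAt P 0 :=
    hPcont.continuousAt (Metric.ball_mem_nhds _ hr)
  -- derivative of sin (π v)
  have hsinD : HasDerivAt (fun v : ℂ => Complex.sin ((Real.pi : ℂ) * v)) (Real.pi : ℂ) 0 := by
    have h1 : HasDerivAt (fun v : ℂ => (Real.pi : ℂ) * v) (Real.pi : ℂ) 0 := by
      simpa using (hasDerivAt_id (0:ℂ)).const_mul (Real.pi : ℂ)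
    have h2 := (Complex.hasDerivAt_sin ((Real.pi : ℂ) * 0)).comp 0 h1
    simpa [Function.comp_def] using h2
  have hslope := hasDerivAt_iff_tendsto_slope.1 hsinD
  have hPt : Tendsto P (𝓝[≠] (0:ℂ)) (𝓝 (P 0)) :=
    hPat.tendsto.mono_left nhdsWithin_le_nhds
  set c : ℂ := Complex.exp ((Real.pi : ℂ) * Complex.I * τ / 4) with hcdef
  have hcomb : Tendsto (fun v : ℂ =>
      2 * c * (slope (fun w : ℂ => Complex.sin ((Real.pi : ℂ) * w)) 0 v) * P v)
      (𝓝[≠] (0:ℂ)) (𝓝 (2 * c * (Real.pi : ℂ) * P 0)) :=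
    (tendsto_const_nhds.mul hslope).mul hPt
  have hjac : ∀ w : ℂ, jacobiTheta0 w τ = 2 * c * Complex.sin ((Real.pi : ℂ) * w) * P w :=
    fun w => rfl
  have hEq : slope (fun v => jacobiTheta0 v τ) 0 =
      fun v : ℂ => 2 * c * (slope (fun w : ℂ => Complex.sin ((Real.pi : ℂ) * w)) 0 v) * P v := by
    funext v
    rw [slope_def_field, slope_def_field, hjac v, hjac 0]
    rw [show Complex.sin ((Real.pi : ℂ) * 0) = 0 by simp]
    ring
  have hD : HasDerivAt (fun v => jacobiTheta0 v τ) (2 * c * (Real.pi : ℂ) * P 0) 0 := by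
    rw [hasDerivAt_iff_tendsto_slope, hEq]
    exact hcomb
  have hP0 : P 0 = ∏' j : ℕ, ((1 - q ^ (j + 1)) * (1 - q ^ (j + 1)) * (1 - q ^ (j + 1))) := by
    rw [hPdef]
    apply tprod_congr
    intro j
    simp [hFdef]
  rw [hP0] at hD
  exact hD

lemma jac_norm_qhalf_lt_one (τ : ℂ) (hτ : 0 < τ.im) : ‖qhalf τ‖ < 1 := by
  rw [qhalf, Complex.norm_exp, Real.exp_lt_one_iff]
  have : ((Real.pi : ℂ) * Complex.I * τ).re = -(Real.pi * τ.im) := by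
    simp [Complex.mul_re, Complex.mul_im]
  rw [this]
  have := Real.pi_pos
  nlinarith

lemma jac_qhalf_sq (τ : ℂ) : qhalf τ ^ 2 = qnome τ := by
  rw [qhalf, qnome, sq, ← Complex.exp_add]
  congr 1
  ring


end JacAux

/-- The Jacobi identity `θ'(0,τ) = π θ₁(0,τ) θ₂(0,τ) θ₃(0,τ)`. -/
theorem jacobi_identity (τ : ℂ) (hτ : 0 < τ.im) :
    deriv (fun v => jacobiTheta0 v τ) 0 =
      (Real.pi : ℂ) * jacobiTheta1 0 τ * jacobiTheta2 0 τ * jacobiTheta3 0 τ := by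
  have hq1 : ‖qnome τ‖ < 1 := jac_norm_qnome_lt_one τ hτ
  have hh1 : ‖qhalf τ‖ < 1 := jac_norm_qhalf_lt_one τ hτ
  have hsq : qhalf τ ^ 2 = qnome τ := jac_qhalf_sq τ
  set D : ℂ := ∏' n : ℕ, (1 - qnome τ ^ (n + 1)) with hD
  set A : ℂ := ∏' n : ℕ, (1 + qnome τ ^ (n + 1)) with hA
  set B : ℂ := ∏' n : ℕ, (1 - qhalf τ ^ (2 * n + 1)) with hB
  set C : ℂ := ∏' n : ℕ, (1 + qhalf τ ^ (2 * n + 1)) with hC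
  have MD : Multipliable fun n : ℕ => 1 - qnome τ ^ (n + 1) :=
    jac_multipliable_one_sub hq1 _ fun n => le_refl _
  have MA : Multipliable fun n : ℕ => 1 + qnome τ ^ (n + 1) :=
    jac_multipliable_one_add hq1 _ fun n => le_refl _
  have MB : Multipliable fun n : ℕ => 1 - qhalf τ ^ (2 * n + 1) :=
    jac_multipliable_one_sub hh1 _ fun n => by omega
  have MC : Multipliable fun n : ℕ => 1 + qhalf τ ^ (2 * n + 1) :=
    jac_multipliable_one_add hh1 _ fun n => by omega
  have hLHS : deriv (fun v => jacobiTheta0 v τ) 0 =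
      2 * Complex.exp ((Real.pi : ℂ) * Complex.I * τ / 4) * (Real.pi : ℂ) * (D * D * D) := by
    rw [(jac_theta0_hasDerivAt τ hτ).deriv]
    rw [Multipliable.tprod_mul (MD.mul MD) MD, Multipliable.tprod_mul MD MD]
  have e1 : jacobiTheta1 0 τ =
      2 * Complex.exp ((Real.pi : ℂ) * Complex.I * τ / 4) * (D * A * A) := by
    rw [jacobiTheta1]
    simp only [mul_zero, neg_zero, Complex.exp_zero, one_mul, Complex.cos_zero, mul_one]
    rw [Multipliable.tprod_mul (MD.mul MA) MA, Multipliable.tprod_mul MD MA]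
  have e2 : jacobiTheta2 0 τ = D * B * B := by
    rw [jacobiTheta2]
    simp only [mul_zero, neg_zero, Complex.exp_zero, one_mul]
    rw [Multipliable.tprod_mul (MD.mul MB) MB, Multipliable.tprod_mul MD MB]
  have e3 : jacobiTheta3 0 τ = D * C * C := by
    rw [jacobiTheta3]
    simp only [mul_zero, neg_zero, Complex.exp_zero, one_mul]
    rw [Multipliable.tprod_mul (MD.mul MC) MC, Multipliable.tprod_mul MD MC]
  have hBC : B * C = ∏' n : ℕ, (1 - qnome τ ^ (2 * n + 1)) := by
    rw [hB, hC, ← Multipliable.tprod_mul MB MC]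
    exact tprod_congr fun n => by rw [← hsq]; ring
  have hABC : A * (B * C) = 1 := by
    rw [hBC, hA]
    exact jac_euler hq1
  rw [hLHS, e1, e2, e3]
  linear_combination (-2 * Complex.exp ((Real.pi : ℂ) * Complex.I * τ / 4) * (Real.pi : ℂ) *
    D * D * D * (A * B * C + 1)) * hABC
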